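/- Let (X,d) be a metric space and C ⊆ X × X a cyclically monotonic set. If (x_0,x_1), (x_1,x_2), …, (x_{n−1},x_n) ∈ C, then Σ_{k=1}^n d(x_{k−1},x_k) = d(x_0,x_n); in particular each intermediate point x_k lies on the metric segment [x_0,x_n] = {p : d(x_0,p)+d(p,x_n) = d(x_0,x_n)}. -/

import Mathlib

/-- A set `C ⊆ X × X` is cyclically monotonic if for all
`(x_1,y_1), …, (x_n,y_n) ∈ C` and every permutation `σ`,
`Σ d(x_k,y_k) ≤ Σ d(x_k, y_{σ(k)})`. -/
def IsCyclicallyMonotonic {X : Type*} (d : X → X → ℝ) (C : Set (X × X)) : Prop :=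
  ∀ (n : ℕ) (p : Fin n → X × X), (∀ i, p i ∈ C) → ∀ σ : Equiv.Perm (Fin n),
    ∑ i, d (p i).1 (p i).2 ≤ ∑ i, d (p i).1 (p (σ i)).2

/-- Let `(X,d)` be a metric space and `C ⊆ X × X` cyclically monotonic.  If
`(x_0,x_1), (x_1,x_2), …, (x_{n-1},x_n) ∈ C`, then
`Σ_{k=1}^n d(x_{k-1},x_k) = d(x_0,x_n)`; in particular each intermediate point `x_k`
lies on the metric segment `[x_0,x_n]`. -/
theorem cyclicallyMonotonic_chain {X : Type*} [MetricSpace X] (C : Set (X × X))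
    (hC : IsCyclicallyMonotonic dist C) (n : ℕ) (x : Fin (n + 1) → X)
    (hx : ∀ i : Fin n, (x i.castSucc, x i.succ) ∈ C) :
    (∑ i : Fin n, dist (x i.castSucc) (x i.succ) = dist (x 0) (x (Fin.last n))) ∧
    ∀ i : Fin (n + 1),
      dist (x 0) (x i) + dist (x i) (x (Fin.last n)) = dist (x 0) (x (Fin.last n)) := by
  -- a ℕ-indexed version of the chain, clamped at `n`
  set f : ℕ → X := fun k => x ⟨min k n, Nat.lt_succ_of_le (min_le_right k n)⟩ with hf
  have hf0 : f 0 = x 0 := by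
    simp only [hf]
    congr 1
  have hfn : f n = x (Fin.last n) := by
    simp only [hf]
    congr 1
    exact Fin.ext (by simp [Fin.last])
  have hfi : ∀ i : Fin (n + 1), f i.val = x i := by
    intro i
    simp only [hf]
    congr 1
    exact Fin.ext (by simp [Nat.min_eq_left (Nat.lt_succ_iff.mp i.isLt)])
  -- the sum over the chain equals the corresponding ℕ-range sum
  have hsum : ∑ i : Fin n, dist (x i.castSucc) (x i.succ)
      = ∑ k ∈ Finset.range n, dist (f k) (f (k + 1)) := by
    rw [← Fin.sum_univ_eq_sum_range]
    refine Finset.sum_congr rfl fun i _ => ?_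
    congr 1
    · rw [← hfi i.castSucc]; rfl
    · rw [← hfi i.succ]; rfl
  -- upper bound: cyclic monotonicity with the cyclic permutation
  have key : ∑ i : Fin n, dist (x i.castSucc) (x i.succ) ≤ dist (x 0) (x (Fin.last n)) := by
    cases n with
    | zero => simp
    | succ m =>
      have h := hC (m + 1) (fun i => (x i.castSucc, x i.succ)) (fun i => hx i)
        (finRotate (m + 1)).symm
      refine h.trans_eq ?_
      have hre := (Equiv.sum_comp (finRotate (m + 1))
        (fun i => dist (x i.castSucc) (x (((finRotate (m + 1)).symm i)).succ))).symm
      simp only at hre ⊢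
      rw [hre]
      simp only [Equiv.symm_apply_apply]
      rw [Fin.sum_univ_castSucc]
      have h0 : ∀ j : Fin m,
          dist (x (finRotate (m + 1) j.castSucc).castSucc) (x j.castSucc.succ) = 0 := by
        intro j
        have : (finRotate (m + 1) j.castSucc).castSucc = j.castSucc.succ := by
          rw [finRotate_succ_apply, Fin.coeSucc_eq_succ]; rfl
        rw [this, dist_self]
      rw [Finset.sum_congr rfl (fun j _ => h0 j), Finset.sum_const, smul_zero, zero_add]
      have hlast : finRotate (m + 1) (Fin.last m) = 0 := by
        rw [finRotate_succ_apply, Fin.last_add_one]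
      rw [hlast]
      simp [Fin.succ_last]
  -- lower bound: triangle inequality along the chain
  have tri : dist (x 0) (x (Fin.last n))
      ≤ ∑ i : Fin n, dist (x i.castSucc) (x i.succ) := by
    rw [hsum, ← hf0, ← hfn]
    exact dist_le_range_sum_dist f n
  have hEq : ∑ i : Fin n, dist (x i.castSucc) (x i.succ) = dist (x 0) (x (Fin.last n)) :=
    le_antisymm key tri
  refine ⟨hEq, fun i => ?_⟩
  -- partial sums bound the two pieces
  have hi : (i : ℕ) ≤ n := Nat.lt_succ_iff.mp i.isLt
  have h1 : dist (x 0) (x i) ≤ ∑ k ∈ Finset.range i.val, dist (f k) (f (k + 1)) := by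
    rw [← hf0, ← hfi i]
    exact dist_le_range_sum_dist f i.val
  have h2 : dist (x i) (x (Fin.last n)) ≤ ∑ k ∈ Finset.Ico i.val n, dist (f k) (f (k + 1)) := by
    rw [← hfn, ← hfi i]
    exact dist_le_Ico_sum_dist f hi
  have hsplit : (∑ k ∈ Finset.range i.val, dist (f k) (f (k + 1)))
      + ∑ k ∈ Finset.Ico i.val n, dist (f k) (f (k + 1))
      = ∑ k ∈ Finset.range n, dist (f k) (f (k + 1)) := by
    rw [Finset.range_eq_Ico, Finset.range_eq_Ico]
    exact Finset.sum_Ico_consecutive _ (Nat.zero_le _) hi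
  have hle : dist (x 0) (x i) + dist (x i) (x (Fin.last n)) ≤ dist (x 0) (x (Fin.last n)) := by
    calc dist (x 0) (x i) + dist (x i) (x (Fin.last n))
        ≤ (∑ k ∈ Finset.range i.val, dist (f k) (f (k + 1)))
          + ∑ k ∈ Finset.Ico i.val n, dist (f k) (f (k + 1)) := add_le_add h1 h2
      _ = ∑ k ∈ Finset.range n, dist (f k) (f (k + 1)) := hsplit
      _ = dist (x 0) (x (Fin.last n)) := by rw [← hsum, hEq]
  exact le_antisymm hle (dist_triangle _ _ _)
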